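/- Let q be a prime power with odd characteristic. The number of orbits of the involution z ↦ (1/z₁,…,1/z_n) acting on the set Z̊_n(𝔽̄_q)^{Frobenius-twisted fixed points}, computed as the set of points of M_{C_n} over 𝔽_q, equals (q - n - 1)(q-3)(q-5)⋯(q-2n+1). Concretely: ½[ #{(z₁,…,z_n) ∈ 𝔽_q^n : zᵢ≠±z_j (i≠j), zᵢ∉{0,±1}} + #{(z₁,…,z_n) ∈ 𝔽_{q²}^n : zᵢ^{q+1}=1, zᵢ^q ≠ ±z_j^q for i≠j applied as zᵢ≠±z_j, zᵢ∉{0,±1}} ] = (q-n-1)(q-3)(q-5)⋯(q-2n+1). -/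

import Mathlib

open Finset

private lemma count_aux {K : Type*} [Field K] [Fintype K] (hchar : ringChar K ≠ 2) :
    ∀ (n : ℕ) (S : Finset K), (0 : K) ∉ S → (∀ x ∈ S, -x ∈ S) →
    Nat.card {z : Fin n → K //
        (∀ i j, i ≠ j → z i ≠ z j ∧ z i ≠ -z j) ∧ ∀ i, z i ∈ S} =
      ∏ k ∈ Finset.range n, (S.card - 2 * k) := by
  classical
  have h2 : (2 : K) ≠ 0 := Ring.two_ne_zero hchar
  intro n
  induction n with
  | zero =>
    intro S h0 hneg
    rw [Finset.range_zero, Finset.prod_empty]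
    rw [Nat.card_eq_one_iff_unique]
    constructor
    · constructor
      intro a b
      apply Subtype.ext
      funext i
      exact i.elim0
    · exact ⟨⟨fun i => i.elim0, fun i => i.elim0, fun i => i.elim0⟩⟩
  | succ n ih =>
    intro S h0 hneg
    have hne : ∀ a ∈ S, -a ≠ a := by
      intro a ha h
      have ha0 : a ≠ 0 := fun h' => h0 (h' ▸ ha)
      apply ha0
      have h2a : (2 : K) * a = 0 := by linear_combination -h
      rcases mul_eq_zero.mp h2a with h' | h'
      · exact absurd h' h2
      · exact h'
    -- the equivalence
    let e : {z : Fin (n+1) → K //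
          (∀ i j, i ≠ j → z i ≠ z j ∧ z i ≠ -z j) ∧ ∀ i, z i ∈ S} ≃
        (a : {x : K // x ∈ S}) × {w : Fin n → K //
          (∀ i j, i ≠ j → w i ≠ w j ∧ w i ≠ -w j) ∧
            ∀ i, w i ∈ (S.erase (a : K)).erase (-(a : K))} :=
      { toFun := fun z => ⟨⟨z.1 0, z.2.2 0⟩, ⟨Fin.tail z.1, by
          constructor
          · intro i j hij
            exact z.2.1 i.succ j.succ (fun h => hij (Fin.succ_injective _ h))
          · intro i
            rw [Finset.mem_erase, Finset.mem_erase]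
            have h1 := z.2.1 i.succ 0 (Fin.succ_ne_zero i)
            refine ⟨?_, h1.1, z.2.2 i.succ⟩
            intro h
            exact h1.2 h⟩⟩
        invFun := fun p => ⟨Fin.cons (p.1 : K) p.2.1, by
          obtain ⟨⟨a, ha⟩, ⟨w, hw1, hw2⟩⟩ := p
          have hw2' : ∀ i, w i ≠ a ∧ w i ≠ -a ∧ w i ∈ S := by
            intro i
            have := hw2 i
            rw [Finset.mem_erase, Finset.mem_erase] at this
            exact ⟨this.2.1, this.1, this.2.2⟩
          constructor
          · intro i j
            cases i using Fin.cases with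
            | zero =>
              cases j using Fin.cases with
              | zero => intro h; exact absurd rfl h
              | succ j =>
                intro _
                simp only [Fin.cons_zero, Fin.cons_succ]
                refine ⟨fun h => (hw2' j).1 h.symm, fun h => (hw2' j).2.1 ?_⟩
                rw [h]; ring
            | succ i =>
              cases j using Fin.cases with
              | zero =>
                intro _
                simp only [Fin.cons_zero, Fin.cons_succ]
                exact ⟨(hw2' i).1, (hw2' i).2.1⟩
              | succ j =>
                intro hij
                simp only [Fin.cons_succ]
                exact hw1 i j (fun h => hij (h ▸ rfl))
          · intro i
            cases i using Fin.cases with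
            | zero => simpa using ha
            | succ j => simpa using (hw2' j).2.2⟩
        left_inv := by
          intro z
          apply Subtype.ext
          exact Fin.cons_self_tail z.1
        right_inv := by
          intro p
          obtain ⟨⟨a, ha⟩, ⟨w, hw⟩⟩ := p
          refine Sigma.ext rfl ?_
          simp only [Fin.cons_zero, Fin.tail_cons]
          rfl }
    rw [Nat.card_congr e]
    haveI : ∀ (a : {x : K // x ∈ S}), Fintype {w : Fin n → K //
        (∀ i j, i ≠ j → w i ≠ w j ∧ w i ≠ -w j) ∧
          ∀ i, w i ∈ (S.erase (a : K)).erase (-(a : K))} := fun a => Fintype.ofFinite _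
    rw [Nat.card_eq_fintype_card, Fintype.card_sigma]
    have hcard : ∀ a : {x : K // x ∈ S},
        Fintype.card {w : Fin n → K //
          (∀ i j, i ≠ j → w i ≠ w j ∧ w i ≠ -w j) ∧
            ∀ i, w i ∈ (S.erase (a : K)).erase (-(a : K))} =
          ∏ k ∈ Finset.range n, (S.card - 2 - 2 * k) := by
      intro a
      have h0' : (0 : K) ∉ (S.erase (a : K)).erase (-(a : K)) := by
        intro h
        exact h0 (Finset.mem_of_mem_erase (Finset.mem_of_mem_erase h))
      have hneg' : ∀ x ∈ (S.erase (a : K)).erase (-(a : K)),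
          -x ∈ (S.erase (a : K)).erase (-(a : K)) := by
        intro x hx
        rw [Finset.mem_erase, Finset.mem_erase] at hx ⊢
        refine ⟨fun h => hx.2.1 (neg_injective h), fun h => hx.1 ?_, hneg x hx.2.2⟩
        rw [← h, neg_neg]
      have hc : ((S.erase (a : K)).erase (-(a : K))).card = S.card - 2 := by
        rw [Finset.card_erase_of_mem, Finset.card_erase_of_mem a.2]
        · omega
        · rw [Finset.mem_erase]
          exact ⟨hne a a.2, hneg a a.2⟩
      rw [← Nat.card_eq_fintype_card, ih _ h0' hneg', hc]
    rw [Finset.sum_congr rfl (fun a _ => hcard a)]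
    have hk : ∀ k, S.card - 2 * (k + 1) = S.card - 2 - 2 * k := by intro k; omega
    rw [Finset.sum_const, Finset.card_univ, Fintype.card_coe, smul_eq_mul,
      Finset.prod_range_succ', Finset.prod_congr rfl (fun k _ => hk k),
      mul_comm, Nat.mul_zero, Nat.sub_zero]

/-- **Point count of `𝓜_{Cₙ}(𝔽_q)`.** Let `F` be a finite field with `q` elements of odd
characteristic, and `E` a finite field with `q²` elements (of the same odd characteristic).
The `𝔽_q`-points of `𝓜_{Cₙ}`, counted as half the sum of the Frobenius-fixed tuples in
`Z̊ₙ(𝔽_q)` and the Frobenius-twisted fixed tuples (those `z ∈ E^n` with `z_i^{q+1} = 1`),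
number `(q-n-1)(q-3)(q-5)⋯(q-2n+1)`; concretely, the sum of the two counts equals
`2·(q-n-1)(q-3)(q-5)⋯(q-2n+1)`. -/
theorem MCn_point_count {F E : Type*} [Field F] [Fintype F] [Field E] [Fintype E]
    (q : ℕ) (hq : Fintype.card F = q) (hE : Fintype.card E = q ^ 2)
    (hcharF : ringChar F ≠ 2) (hcharE : ringChar E = ringChar F)
    (n : ℕ) (hn : 1 ≤ n) :
    Nat.card {z : Fin n → F //
        (∀ i j, i ≠ j → z i ≠ z j ∧ z i ≠ -z j) ∧
          ∀ i, z i ≠ 0 ∧ z i ≠ 1 ∧ z i ≠ -1} +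
      Nat.card {z : Fin n → E //
        (∀ i, z i ^ (q + 1) = 1) ∧
          (∀ i j, i ≠ j → z i ≠ z j ∧ z i ≠ -z j) ∧
          ∀ i, z i ≠ 0 ∧ z i ≠ 1 ∧ z i ≠ -1} =
      2 * ((q - n - 1) * ∏ i ∈ Finset.range (n - 1), (q - (2 * i + 3))) := by
  classical
  obtain ⟨m, rfl⟩ : ∃ m, n = m + 1 := ⟨n - 1, by omega⟩
  have hcharE2 : ringChar E ≠ 2 := hcharE ▸ hcharF
  have hqodd : q % 2 = 1 := hq ▸ FiniteField.odd_card_of_char_ne_two hcharF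
  have hq2 : 2 ≤ q := hq ▸ Fintype.one_lt_card
  have hq3 : 3 ≤ q := by omega
  -- arithmetic facts, precomputed (omega breaks on later context)
  have hA : 2 * m + 3 ≤ q → q - (2 * m + 3) + (q - 1) = 2 * (q - (m + 1) - 1) := by omega
  have hB : ¬(2 * m + 3 ≤ q) → (q - 3) / 2 < m := by omega
  have hC : ¬(2 * m + 3 ≤ q) → q - (2 * ((q - 3) / 2) + 3) = 0 := by omega
  -- the set S₁ in F
  have hF11 : (1 : F) ≠ -1 := fun h => Ring.neg_one_ne_one_of_char_ne_two hcharF h.symm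
  obtain ⟨S₁, hS₁⟩ : ∃ S : Finset F, S = Finset.univ \ {0, 1, -1} := ⟨_, rfl⟩
  have hS₁card : S₁.card = q - 3 := by
    have c3 : ({0, 1, -1} : Finset F).card = 3 := by
      rw [Finset.card_insert_of_notMem (by simp), Finset.card_insert_of_notMem (by simp [hF11]),
        Finset.card_singleton]
    rw [hS₁, Finset.card_sdiff_of_subset (Finset.subset_univ _), Finset.card_univ, hq, c3]
  have hS₁0 : (0 : F) ∉ S₁ := by simp [hS₁]
  have hS₁neg : ∀ x ∈ S₁, -x ∈ S₁ := by
    intro x hx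
    simp only [hS₁, Finset.mem_sdiff, Finset.mem_univ, true_and, Finset.mem_insert,
      Finset.mem_singleton, not_or] at hx ⊢
    refine ⟨fun h => hx.1 (by rw [← neg_neg x, h, neg_zero]),
      fun h => hx.2.2 (by rw [← neg_neg x, h]),
      fun h => hx.2.1 (by rw [← neg_neg x, h, neg_neg])⟩
  -- primitive (q+1)-th root of unity in E
  obtain ⟨g, hg⟩ := IsCyclic.exists_generator (α := Eˣ)
  have hgord : orderOf g = q ^ 2 - 1 := by
    rw [orderOf_eq_card_of_forall_mem_zpowers hg, Nat.card_eq_fintype_card,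
      Fintype.card_units, hE]
  have huord : orderOf (g ^ (q - 1)) = q + 1 := by
    rw [orderOf_pow, hgord]
    have h1 : q ^ 2 - 1 = (q - 1) * (q + 1) := by
      obtain ⟨t, rfl⟩ : ∃ t, q = t + 1 := ⟨q - 1, by omega⟩
      rw [Nat.add_sub_cancel]
      exact Nat.sub_eq_of_eq_add (by ring)
    have hdvd : (q - 1) ∣ (q ^ 2 - 1) := ⟨q + 1, h1⟩
    have hqpos : 0 < q - 1 := by omega
    rw [Nat.gcd_eq_right hdvd, h1, Nat.mul_div_cancel_left _ hqpos]
  have hζ : IsPrimitiveRoot ((g ^ (q - 1) : Eˣ) : E) (q + 1) := by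
    rw [IsPrimitiveRoot.coe_units_iff]
    exact huord ▸ IsPrimitiveRoot.orderOf (g ^ (q - 1))
  have hq1pos : 0 < q + 1 := Nat.succ_pos q
  have hnth : ∀ x : E, x ∈ Polynomial.nthRootsFinset (q + 1) (1 : E) ↔ x ^ (q + 1) = 1 :=
    fun x => Polynomial.mem_nthRootsFinset hq1pos 1
  have hnthcard : (Polynomial.nthRootsFinset (q + 1) (1 : E)).card = q + 1 :=
    hζ.card_nthRootsFinset
  have hE11 : (1 : E) ≠ -1 := fun h => Ring.neg_one_ne_one_of_char_ne_two hcharE2 h.symm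
  have heven : Even (q + 1) := ⟨(q + 1) / 2, by omega⟩
  have hneg1mem : (-1 : E) ∈ Polynomial.nthRootsFinset (q + 1) (1 : E) := by
    rw [hnth, heven.neg_pow, one_pow]
  have h1mem : (1 : E) ∈ Polynomial.nthRootsFinset (q + 1) (1 : E) := by rw [hnth, one_pow]
  obtain ⟨S₂, hS₂⟩ : ∃ S : Finset E, S = Polynomial.nthRootsFinset (q + 1) (1 : E) \ {1, -1} := ⟨_, rfl⟩
  have hS₂card : S₂.card = q - 1 := by
    have c2 : ({1, -1} : Finset E).card = 2 := by
      rw [Finset.card_insert_of_notMem (by simp [hE11]), Finset.card_singleton]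
    have hsub : ({1, -1} : Finset E) ⊆ Polynomial.nthRootsFinset (q + 1) (1 : E) := by
      intro x hx
      simp only [Finset.mem_insert, Finset.mem_singleton] at hx
      rcases hx with h | h <;> rw [h]
      · exact h1mem
      · exact hneg1mem
    rw [hS₂, Finset.card_sdiff_of_subset hsub, hnthcard, c2]
    omega
  have hS₂0 : (0 : E) ∉ S₂ := by
    rw [hS₂]
    intro h
    have := (hnth 0).mp (Finset.mem_sdiff.mp h).1
    rw [zero_pow (Nat.succ_ne_zero q)] at this
    exact zero_ne_one this
  have hS₂neg : ∀ x ∈ S₂, -x ∈ S₂ := by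
    intro x hx
    rw [hS₂, Finset.mem_sdiff] at hx ⊢
    simp only [Finset.mem_insert, Finset.mem_singleton, not_or] at hx ⊢
    refine ⟨by rw [hnth, heven.neg_pow]; exact (hnth x).mp hx.1, ?_, ?_⟩
    · intro h; exact hx.2.2 (by rw [← neg_neg x, h])
    · intro h; exact hx.2.1 (neg_injective h)
  -- the two counts
  have count1 : Nat.card {z : Fin (m + 1) → F //
      (∀ i j, i ≠ j → z i ≠ z j ∧ z i ≠ -z j) ∧
        ∀ i, z i ≠ 0 ∧ z i ≠ 1 ∧ z i ≠ -1} =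
      ∏ k ∈ Finset.range (m + 1), (q - (2 * k + 3)) := by
    rw [Nat.card_congr (Equiv.subtypeEquivRight (q := fun z : Fin (m + 1) → F =>
      (∀ i j, i ≠ j → z i ≠ z j ∧ z i ≠ -z j) ∧ ∀ i, z i ∈ S₁) ?_)]
    · rw [count_aux hcharF (m + 1) S₁ hS₁0 hS₁neg, hS₁card]
      exact Finset.prod_congr rfl fun k _ => by rw [Nat.sub_sub, Nat.add_comm]
    · intro z
      constructor
      · rintro ⟨h1, h2⟩
        refine ⟨h1, fun i => ?_⟩
        simp only [hS₁, Finset.mem_sdiff, Finset.mem_univ, true_and, Finset.mem_insert,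
          Finset.mem_singleton, not_or]
        exact ⟨(h2 i).1, (h2 i).2.1, (h2 i).2.2⟩
      · rintro ⟨h1, h2⟩
        refine ⟨h1, fun i => ?_⟩
        have := h2 i
        simp only [hS₁, Finset.mem_sdiff, Finset.mem_univ, true_and, Finset.mem_insert,
          Finset.mem_singleton, not_or] at this
        exact ⟨this.1, this.2.1, this.2.2⟩
  have count2 : Nat.card {z : Fin (m + 1) → E //
      (∀ i, z i ^ (q + 1) = 1) ∧
        (∀ i j, i ≠ j → z i ≠ z j ∧ z i ≠ -z j) ∧
        ∀ i, z i ≠ 0 ∧ z i ≠ 1 ∧ z i ≠ -1} =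
      ∏ k ∈ Finset.range (m + 1), (q - (2 * k + 1)) := by
    rw [Nat.card_congr (Equiv.subtypeEquivRight (q := fun z : Fin (m + 1) → E =>
      (∀ i j, i ≠ j → z i ≠ z j ∧ z i ≠ -z j) ∧ ∀ i, z i ∈ S₂) ?_)]
    · rw [count_aux hcharE2 (m + 1) S₂ hS₂0 hS₂neg, hS₂card]
      exact Finset.prod_congr rfl fun k _ => by rw [Nat.sub_sub, Nat.add_comm]
    · intro z
      constructor
      · rintro ⟨hpow, h1, h2⟩
        refine ⟨h1, fun i => ?_⟩
        rw [hS₂, Finset.mem_sdiff]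
        simp only [Finset.mem_insert, Finset.mem_singleton, not_or]
        exact ⟨(hnth _).mpr (hpow i), (h2 i).2.1, (h2 i).2.2⟩
      · rintro ⟨h1, h2⟩
        have hmem : ∀ i, z i ^ (q + 1) = 1 ∧ z i ≠ 1 ∧ z i ≠ -1 := by
          intro i
          have := h2 i
          rw [hS₂, Finset.mem_sdiff] at this
          simp only [Finset.mem_insert, Finset.mem_singleton, not_or] at this
          exact ⟨(hnth _).mp this.1, this.2.1, this.2.2⟩
        refine ⟨fun i => (hmem i).1, h1, fun i => ⟨?_, (hmem i).2.1, (hmem i).2.2⟩⟩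
        intro h
        have := (hmem i).1
        rw [h, zero_pow (Nat.succ_ne_zero q)] at this
        exact zero_ne_one this
  rw [count1, count2]
  clear count1 count2
  -- final arithmetic
  have e1 : ∏ k ∈ Finset.range (m + 1), (q - (2 * k + 3)) =
      (∏ k ∈ Finset.range m, (q - (2 * k + 3))) * (q - (2 * m + 3)) :=
    Finset.prod_range_succ _ m
  have e2 : ∏ k ∈ Finset.range (m + 1), (q - (2 * k + 1)) =
      (∏ k ∈ Finset.range m, (q - (2 * k + 3))) * (q - 1) := by
    rw [Finset.prod_range_succ']
    have h' : ∏ k ∈ Finset.range m, (q - (2 * (k + 1) + 1)) =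
        ∏ k ∈ Finset.range m, (q - (2 * k + 3)) :=
      Finset.prod_congr rfl fun k _ => by
        rw [show 2 * (k + 1) + 1 = 2 * k + 3 from by ring]
    rw [h']
  rw [e1, e2, ← Nat.mul_add]
  clear e1 e2
  simp only [Nat.add_sub_cancel]
  by_cases hcase : 2 * m + 3 ≤ q
  · rw [hA hcase]
    ring
  · have hP : ∏ k ∈ Finset.range m, (q - (2 * k + 3)) = 0 := by
      apply Finset.prod_eq_zero (i := (q - 3) / 2)
      · rw [Finset.mem_range]; exact hB hcase
      · exact hC hcase
    rw [hP]
    ring
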